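/- The polynomial x³ divides the characteristic polynomial of the matrix E = M(2,2) in ℚ[q1,q2][x]. -/

import Mathlib

open MvPolynomial Matrix

/-- The matrix of small quantum multiplication by `a1*h1 + a2*h2` on the
ambient cohomology of a Verra fourfold, in the basis
`(1, h1, h2, h1^2, h1*h2, h2^2, h1^2*h2, h1*h2^2, h1^2*h2^2)`. -/
def verraM {R : Type*} [CommRing R] (q1 q2 a1 a2 : R) : Matrix (Fin 9) (Fin 9) R :=
  let b1 := a1 * q1
  let b2 := a2 * q2
  let c := 8 * (a1 + a2) * q1 * q2
  !![0, 2*b1, 2*b2, 0, 0, 0, c, c, 0;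
     a1, 0, 0, 2*b1, 2*b2, 4*b2, 0, 0, c;
     a2, 0, 0, 4*b1, 2*b1, 2*b2, 0, 0, c;
     0, a1, 0, 0, 0, 0, 2*b2, 4*b2, 0;
     0, a2, a1, 0, 0, 0, 2*b1, 2*b2, 0;
     0, 0, a2, 0, 0, 0, 4*b1, 2*b1, 0;
     0, 0, 0, a2, a1, 0, 0, 0, 2*b2;
     0, 0, 0, 0, a2, a1, 0, 0, 2*b1;
     0, 0, 0, 0, 0, 0, a2, a1, 0]

/-- `R = ℚ[q1, q2]`. -/
abbrev Rq : Type := MvPolynomial (Fin 2) ℚ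

noncomputable def q1 : Rq := X 0
noncomputable def q2 : Rq := X 1

/-- A `9 × 6` matrix whose columns are the columns `0,1,2,3,5,7` of `verraM q1 q2 2 2`. -/
noncomputable def vA : Matrix (Fin 9) (Fin 6) Rq :=
  !![0, 4*q1, 4*q2, 0, 0, 32*q1*q2;
     2, 0, 0, 4*q1, 8*q2, 0;
     2, 0, 0, 8*q1, 4*q2, 0;
     0, 2, 0, 0, 0, 8*q2;
     0, 2, 2, 0, 0, 4*q2;
     0, 0, 2, 0, 0, 4*q1;
     0, 0, 0, 2, 0, 0;
     0, 0, 0, 0, 2, 0;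
     0, 0, 0, 0, 0, 2]

/-- A `6 × 9` matrix expressing each column of `verraM q1 q2 2 2` in terms of the
columns of `vA`. -/
noncomputable def vB : Matrix (Fin 6) (Fin 9) Rq :=
  !![1, 0, 0, 0, -(2*q1+2*q2), 0, 0, 0, 4*q1*q2;
     0, 1, 0, 0, 0, 0, -(2*q2), 0, 0;
     0, 0, 1, 0, 0, 0, 2*q1, 0, 0;
     0, 0, 0, 1, 1, 0, 0, 0, 2*q2;
     0, 0, 0, 0, 1, 1, 0, 0, 2*q1;
     0, 0, 0, 0, 0, 0, 1, 1, 0]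

section ConsVal
variable {α : Type*} {m : ℕ}
lemma cons_val_five (x : α) (u : Fin (m+5) → α) :
    Matrix.vecCons x u 5 =
      Matrix.vecHead (Matrix.vecTail (Matrix.vecTail (Matrix.vecTail (Matrix.vecTail u)))) := rfl
lemma cons_val_six (x : α) (u : Fin (m+6) → α) :
    Matrix.vecCons x u 6 =
      Matrix.vecHead (Matrix.vecTail (Matrix.vecTail (Matrix.vecTail
        (Matrix.vecTail (Matrix.vecTail u))))) := rfl
lemma cons_val_seven (x : α) (u : Fin (m+7) → α) :
    Matrix.vecCons x u 7 =
      Matrix.vecHead (Matrix.vecTail (Matrix.vecTail (Matrix.vecTail (Matrix.vecTail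
        (Matrix.vecTail (Matrix.vecTail u)))))) := rfl
lemma cons_val_eight (x : α) (u : Fin (m+8) → α) :
    Matrix.vecCons x u 8 =
      Matrix.vecHead (Matrix.vecTail (Matrix.vecTail (Matrix.vecTail (Matrix.vecTail
        (Matrix.vecTail (Matrix.vecTail (Matrix.vecTail u))))))) := rfl
end ConsVal

set_option maxHeartbeats 2000000 in
/-- The rank-six factorization `E = vA * vB` of the quantum multiplication matrix. -/
lemma verra_factor : verraM q1 q2 2 2 = vA * vB := by
  refine Matrix.ext fun i j => ?_
  fin_cases i <;> fin_cases j <;>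
    simp [verraM, vA, vB, Matrix.mul_apply, Fin.sum_univ_succ, Matrix.vecHead, Matrix.vecTail,
      -mul_eq_mul_right_iff, -mul_eq_mul_left_iff,
      cons_val_five, cons_val_six, cons_val_seven, cons_val_eight] <;>
    first | rfl | ring | norm_num

/-- The reversed characteristic polynomial of an `n × n` matrix has degree at most `n`. -/
lemma charpolyRev_natDegree_le {n : Type*} [Fintype n] [DecidableEq n] {R : Type*} [CommRing R]
    (N : Matrix n n R) : N.charpolyRev.natDegree ≤ Fintype.card n := by
  have h := Polynomial.natDegree_det_X_add_C_le (-N) (1 : Matrix n n R)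
  have e : (Polynomial.X : Polynomial R) • (-N).map Polynomial.C
        + (1 : Matrix n n R).map Polynomial.C
      = 1 - (Polynomial.X : Polynomial R) • N.map Polynomial.C := by
    refine Matrix.ext fun i j => ?_
    by_cases hij : i = j <;>
      simp [hij, Matrix.one_apply, Matrix.map_apply, Matrix.sub_apply,
        Matrix.add_apply, Matrix.smul_apply, Matrix.neg_apply, smul_eq_mul] <;> ring
  rw [Matrix.charpolyRev, ← e]
  exact h

/-- The reversed characteristic polynomial is invariant under swapping the factors of a
(possibly rectangular) product. -/
lemma charpolyRev_mul_comm {m n : Type*} [Fintype m] [DecidableEq m] [Fintype n] [DecidableEq n]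
    {R : Type*} [CommRing R] (A : Matrix m n R) (B : Matrix n m R) :
    (A * B).charpolyRev = (B * A).charpolyRev := by
  unfold Matrix.charpolyRev
  rw [Matrix.map_mul, ← Matrix.mul_smul, Matrix.det_one_sub_mul_comm,
    Matrix.smul_mul, ← Matrix.map_mul]

theorem verra_charpoly_cube_dvd :
    (Polynomial.X : Polynomial Rq) ^ 3 ∣ (verraM q1 q2 2 2).charpoly := by
  have key : (verraM q1 q2 2 2).charpolyRev = (vB * vA).charpolyRev := by
    rw [verra_factor]
    exact charpolyRev_mul_comm vA vB
  have hdeg : ((vB * vA).charpolyRev).natDegree ≤ 6 := by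
    simpa using charpolyRev_natDegree_le (vB * vA)
  have hrev : (verraM q1 q2 2 2).charpoly.reverse = (verraM q1 q2 2 2).charpolyRev :=
    Matrix.reverse_charpoly _
  have hdE : (verraM q1 q2 2 2).charpoly.natDegree = 9 := by
    rw [Matrix.charpoly_natDegree_eq_dim, Fintype.card_fin]
  rw [Polynomial.X_pow_dvd_iff]
  intro d hd
  have h9 : (verraM q1 q2 2 2).charpoly.coeff d
      = (verraM q1 q2 2 2).charpoly.reverse.coeff (9 - d) := by
    rw [Polynomial.coeff_reverse, hdE, Polynomial.revAt_le (by omega)]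
    refine congrArg (verraM q1 q2 2 2).charpoly.coeff ?_
    omega
  rw [h9]
  apply Polynomial.coeff_eq_zero_of_natDegree_lt
  rw [hrev, key]
  exact lt_of_le_of_lt hdeg (by omega)
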